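/- Let N ≥ 2 be a real number, 0 < α < 1, and r a positive integer with N^α ≥ 1. Define w_j = 2j/N^{1-α} and z_j = (2^{j+2}+2)/N^{j-α}. Then for each 2 ≤ i ≤ r, z_i·∏_{j=i+1}^r w_j ≤ z_{i-1}·∏_{j=i}^r w_j; consequently ∏_{j=1}^r w_j + ∑_{i=1}^{r-1} z_i·∏_{j=i+1}^r w_j + z_r ≤ (r+1)·z_1·(w_r)^{r-1}. -/

import Mathlib

/-- Key combinatorial estimate telescoping the iterated moment bound. -/
theorem stmt4 (N α : ℝ) (r : ℕ) (hN : 2 ≤ N) (hα1 : 0 < α) (hα2 : α < 1) (hr : 1 ≤ r)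
    (hNα : 1 ≤ N ^ α)
    (w z : ℕ → ℝ)
    (hw : ∀ j : ℕ, w j = 2 * j / N ^ (1 - α))
    (hz : ∀ j : ℕ, z j = (2 ^ (j + 2) + 2) / N ^ ((j : ℝ) - α)) :
    (∀ i : ℕ, 2 ≤ i → i ≤ r →
        z i * ∏ j ∈ Finset.Icc (i + 1) r, w j ≤ z (i - 1) * ∏ j ∈ Finset.Icc i r, w j)
    ∧ ∏ j ∈ Finset.Icc 1 r, w j
        + ∑ i ∈ Finset.Icc 1 (r - 1), z i * ∏ j ∈ Finset.Icc (i + 1) r, w j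
        + z r ≤ (r + 1) * z 1 * (w r) ^ (r - 1) := by
  have hN0 : (0:ℝ) < N := by linarith
  have hP : ∀ x : ℝ, 0 < N ^ x := fun x => Real.rpow_pos_of_pos hN0 x
  have hwnn : ∀ j : ℕ, 0 ≤ w j := by
    intro j; rw [hw]; positivity
  have hznn : ∀ j : ℕ, 0 < z j := by
    intro j; rw [hz]; positivity
  -- key pointwise estimate
  have key : ∀ k : ℕ, z (k + 1) ≤ z k * w (k + 1) := by
    intro k
    rw [hz, hz, hw]
    have hexp : ((k + 1 : ℕ) : ℝ) - α = ((k : ℝ) - α) + (1 - α) + α := by push_cast; ring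
    rw [hexp, Real.rpow_add hN0, Real.rpow_add hN0]
    rw [div_mul_div_comm, div_le_div_iff₀ (by positivity) (by positivity)]
    have hC : (2:ℝ) ≤ 2 * (↑(k+1) : ℝ) := by
      have : (1:ℝ) ≤ (↑(k+1) : ℝ) := by exact_mod_cast Nat.succ_le_succ (Nat.zero_le k)
      linarith
    have hB : (0:ℝ) < (2:ℝ) ^ (k + 2) + 2 := by positivity
    have h1 : (2:ℝ) ^ (k + 1 + 2) + 2 ≤ ((2:ℝ) ^ (k + 2) + 2) * (2 * (↑(k+1))) * N ^ α := by
      have h2 : (2:ℝ) ^ (k + 1 + 2) + 2 ≤ 2 * ((2:ℝ) ^ (k + 2) + 2) := by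
        have : (2:ℝ) ^ (k + 1 + 2) = 2 * (2:ℝ) ^ (k + 2) := by ring
        rw [this]; linarith
      calc (2:ℝ) ^ (k + 1 + 2) + 2 ≤ 2 * ((2:ℝ) ^ (k + 2) + 2) := h2
        _ ≤ (2 * (↑(k+1))) * ((2:ℝ) ^ (k + 2) + 2) :=
            mul_le_mul_of_nonneg_right hC (le_of_lt hB)
        _ ≤ (2 * (↑(k+1))) * ((2:ℝ) ^ (k + 2) + 2) * N ^ α :=
            le_mul_of_one_le_right (by positivity) hNα
        _ = ((2:ℝ) ^ (k + 2) + 2) * (2 * (↑(k+1))) * N ^ α := by ring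
    calc ((2:ℝ) ^ (k + 1 + 2) + 2) * (N ^ ((k:ℝ) - α) * N ^ (1 - α))
        ≤ (((2:ℝ) ^ (k + 2) + 2) * (2 * (↑(k+1))) * N ^ α) * (N ^ ((k:ℝ) - α) * N ^ (1 - α)) := by
          apply mul_le_mul_of_nonneg_right h1; positivity
      _ = ((2:ℝ) ^ (k + 2) + 2) * (2 * (↑(k+1))) * (N ^ ((k:ℝ) - α) * N ^ (1 - α) * N ^ α) := by
          ring
  -- split product at the left endpoint
  have hsplit : ∀ i : ℕ, i ≤ r →
      ∏ j ∈ Finset.Icc i r, w j = w i * ∏ j ∈ Finset.Icc (i + 1) r, w j := by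
    intro i hir
    rw [← Finset.Ico_add_one_right_eq_Icc, ← Finset.Ico_add_one_right_eq_Icc,
      Finset.prod_eq_prod_Ico_succ_bot (show i < r + 1 by omega)]
  have part1 : ∀ i : ℕ, 2 ≤ i → i ≤ r →
      z i * ∏ j ∈ Finset.Icc (i + 1) r, w j ≤ z (i - 1) * ∏ j ∈ Finset.Icc i r, w j := by
    intro i h2 hir
    obtain ⟨k, rfl⟩ : ∃ k, i = k + 1 := ⟨i - 1, (Nat.succ_pred_eq_of_pos (by omega)).symm⟩
    rw [hsplit (k+1) hir]
    simp only [Nat.add_sub_cancel]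
    calc z (k+1) * ∏ j ∈ Finset.Icc (k + 1 + 1) r, w j
        ≤ (z k * w (k+1)) * ∏ j ∈ Finset.Icc (k + 1 + 1) r, w j :=
          mul_le_mul_of_nonneg_right (key k) (Finset.prod_nonneg fun j _ => hwnn j)
      _ = z k * (w (k+1) * ∏ j ∈ Finset.Icc (k + 1 + 1) r, w j) := by ring
  refine ⟨part1, ?_⟩
  -- telescoping
  set B := z 1 * ∏ j ∈ Finset.Icc 2 r, w j with hBdef
  have tele : ∀ i : ℕ, 1 ≤ i → i ≤ r → z i * ∏ j ∈ Finset.Icc (i + 1) r, w j ≤ B := by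
    intro i h1
    induction i, h1 using Nat.le_induction with
    | base => intro _; simp [hBdef]
    | succ k hk IH =>
      intro hkr
      have step : z (k+1) * ∏ j ∈ Finset.Icc (k + 1 + 1) r, w j
          ≤ z k * ∏ j ∈ Finset.Icc (k+1) r, w j := by
        rw [hsplit (k+1) hkr]
        calc z (k+1) * ∏ j ∈ Finset.Icc (k + 1 + 1) r, w j
            ≤ (z k * w (k+1)) * ∏ j ∈ Finset.Icc (k + 1 + 1) r, w j :=
              mul_le_mul_of_nonneg_right (key k) (Finset.prod_nonneg fun j _ => hwnn j)
          _ = z k * (w (k+1) * ∏ j ∈ Finset.Icc (k + 1 + 1) r, w j) := by ring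
      exact le_trans step (IH (by omega))
  have hprodnn : 0 ≤ ∏ j ∈ Finset.Icc 2 r, w j := Finset.prod_nonneg fun j _ => hwnn j
  have hBnn : 0 ≤ B := mul_nonneg (le_of_lt (hznn 1)) hprodnn
  have hw1 : w 1 ≤ z 1 := by
    rw [hw, hz]
    push_cast
    rw [div_le_div_iff₀ (hP _) (hP _)]
    nlinarith [hP (1 - α)]
  have piece1 : ∏ j ∈ Finset.Icc 1 r, w j ≤ B := by
    rw [hsplit 1 hr, hBdef]
    exact mul_le_mul_of_nonneg_right hw1 (Finset.prod_nonneg fun j _ => hwnn j)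
  have piece3 : z r ≤ B := by
    have h := tele r hr le_rfl
    rwa [Finset.Icc_eq_empty (by omega : ¬ r + 1 ≤ r), Finset.prod_empty, mul_one] at h
  have piece2 : ∑ i ∈ Finset.Icc 1 (r-1), z i * ∏ j ∈ Finset.Icc (i + 1) r, w j
      ≤ ((r:ℝ) - 1) * B := by
    have hb : ∀ i ∈ Finset.Icc 1 (r-1), z i * ∏ j ∈ Finset.Icc (i + 1) r, w j ≤ B := by
      intro i hi
      rw [Finset.mem_Icc] at hi
      exact tele i hi.1 (by omega)
    calc ∑ i ∈ Finset.Icc 1 (r-1), z i * ∏ j ∈ Finset.Icc (i + 1) r, w j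
        ≤ (Finset.Icc 1 (r-1)).card • B := Finset.sum_le_card_nsmul _ _ _ hb
      _ = ((r - 1 : ℕ) : ℝ) * B := by
          rw [Nat.card_Icc, nsmul_eq_mul]; norm_num
      _ = ((r:ℝ) - 1) * B := by
          rw [Nat.cast_sub hr]; norm_num
  have hprodbd : ∏ j ∈ Finset.Icc 2 r, w j ≤ (w r) ^ (r - 1) := by
    have hcard : (Finset.Icc 2 r).card = r - 1 := by rw [Nat.card_Icc]; omega
    calc ∏ j ∈ Finset.Icc 2 r, w j ≤ ∏ j ∈ Finset.Icc 2 r, w r := by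
          apply Finset.prod_le_prod (fun j _ => hwnn j)
          intro j hj
          rw [Finset.mem_Icc] at hj
          rw [hw, hw, div_le_div_iff₀ (hP _) (hP _)]
          have hjr : (j:ℝ) ≤ (r:ℝ) := by exact_mod_cast hj.2
          nlinarith [hP (1 - α)]
      _ = (w r) ^ (r - 1) := by rw [Finset.prod_const, hcard]
  calc ∏ j ∈ Finset.Icc 1 r, w j
        + ∑ i ∈ Finset.Icc 1 (r-1), z i * ∏ j ∈ Finset.Icc (i + 1) r, w j
        + z r ≤ B + ((r:ℝ) - 1) * B + B := by
          exact add_le_add (add_le_add piece1 piece2) piece3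
    _ = ((r:ℝ) + 1) * B := by ring
    _ = ((r:ℝ) + 1) * z 1 * ∏ j ∈ Finset.Icc 2 r, w j := by rw [hBdef]; ring
    _ ≤ ((r:ℝ) + 1) * z 1 * (w r) ^ (r - 1) := by
          exact mul_le_mul_of_nonneg_left hprodbd
            (mul_nonneg (by positivity) (hznn 1).le)
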